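/- Suppose K : ℝ → ℝ is continuous, K ≤ 0 everywhere, and along every solution there is uniform recurrence of negative curvature: there exist τ > 0, δ > 0, ε > 0 such that for every t₀, the set {t ∈ [t₀, t₀+τ] : K(t) ≤ −δ} contains an interval of length ε. Then for the Jacobi solution with j(0) = 0, j'(0) = 1, the quantity j(t) grows at least exponentially: there exist C > 0, λ > 1 with j(t) ≥ Cλ^t for all t ≥ τ. -/

import Mathlib

open Set Real

lemma jacobi_pos_aux (K j j' j'' : ℝ → ℝ)
    (hKneg : ∀ t, K t ≤ 0)
    (hj' : ∀ t, HasDerivAt j (j' t) t)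
    (hj'' : ∀ t, HasDerivAt j' (j'' t) t)
    (heq : ∀ t, j'' t + K t * j t = 0)
    (h0 : j 0 = 0) (h1 : j' 0 = 1) :
    ∀ t, 0 ≤ t → 0 ≤ j t ∧ 1 ≤ j' t := by
  have hjc : Continuous j := continuous_iff_continuousAt.mpr fun t => (hj' t).continuousAt
  have hj'c : Continuous j' := continuous_iff_continuousAt.mpr fun t => (hj'' t).continuousAt
  by_contra hcon
  push_neg at hcon
  set S : Set ℝ := {t | 0 ≤ t ∧ (j t < 0 ∨ j' t < 1)} with hSdef
  have hne : S.Nonempty := by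
    obtain ⟨t, ht0, ht⟩ := hcon
    refine ⟨t, ht0, ?_⟩
    by_cases hjt : 0 ≤ j t
    · exact Or.inr (ht hjt)
    · exact Or.inl (not_le.mp hjt)
  have hbdd : BddBelow S := ⟨0, fun x hx => hx.1⟩
  set c : ℝ := sInf S with hcdef
  have hc0 : 0 ≤ c := le_csInf hne fun x hx => hx.1
  -- all points of [0,c] are good
  have hgood : ∀ s ∈ Icc (0:ℝ) c, 0 ≤ j s ∧ 1 ≤ j' s := by
    have hico : ∀ s ∈ Ico (0:ℝ) c, 0 ≤ j s ∧ 1 ≤ j' s := by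
      intro s hs
      by_contra hbad
      push_neg at hbad
      have hsS : s ∈ S := by
        refine ⟨hs.1, ?_⟩
        by_cases hjs : 0 ≤ j s
        · exact Or.inr (hbad hjs)
        · exact Or.inl (not_le.mp hjs)
      exact absurd (csInf_le hbdd hsS) (not_le.mpr hs.2)
    have hF : IsClosed {t | 0 ≤ j t ∧ 1 ≤ j' t} := by
      exact (isClosed_le continuous_const hjc).inter (isClosed_le continuous_const hj'c)
    rcases eq_or_lt_of_le hc0 with h | h
    · intro s hs
      have hs0 : s = 0 := le_antisymm (h ▸ hs.2) hs.1
      simp [hs0, h0, h1, le_refl]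
    · have : Icc (0:ℝ) c ⊆ {t | 0 ≤ j t ∧ 1 ≤ j' t} := by
        rw [← closure_Ico (ne_of_lt h)]
        exact (IsClosed.closure_subset_iff hF).mpr hico
      exact fun s hs => this hs
  have hjc' : 0 ≤ j c := (hgood c ⟨hc0, le_refl c⟩).1
  have hj'c1 : 1 ≤ j' c := (hgood c ⟨hc0, le_refl c⟩).2
  -- find η > 0 with j' ≥ 1/2 on [c, c+η]
  obtain ⟨η, hη, hη2⟩ : ∃ η > (0:ℝ), ∀ t ∈ Icc c (c + η), (1:ℝ)/2 ≤ j' t := by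
    have := Metric.continuousAt_iff.mp (hj'c.continuousAt (x := c))
    obtain ⟨r, hr, hrr⟩ := this (1/2) (by norm_num)
    refine ⟨r/2, by positivity, fun t ht => ?_⟩
    have hd : dist t c < r := by
      rw [Real.dist_eq, abs_sub_lt_iff]
      constructor <;> [linarith [ht.2]; linarith [ht.1]]
    have := hrr hd
    rw [Real.dist_eq, abs_sub_lt_iff] at this
    linarith [this.1]
  set I : Set ℝ := Icc c (c + η) with hIdef
  have hIconv : Convex ℝ I := convex_Icc _ _
  have hIint : interior I = Ioo c (c + η) := interior_Icc
  -- j monotone on I with slope ≥ 1/2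
  have hgmono : MonotoneOn (fun t => j t - t/2) I := by
    apply monotoneOn_of_deriv_nonneg hIconv ((hjc.sub (continuous_id.div_const 2)).continuousOn)
    · intro x hx
      exact ((hj' x).sub ((hasDerivAt_id x).div_const 2)).differentiableAt.differentiableWithinAt
    · intro x hx
      rw [((hj' x).sub ((hasDerivAt_id x).div_const 2)).deriv]
      rw [hIint] at hx
      have := hη2 x ⟨hx.1.le, hx.2.le⟩
      linarith
  have hjpos : ∀ t ∈ Ioc c (c + η), 0 < j t := by
    intro t ht
    have := hgmono ⟨le_refl c, by linarith [hη]⟩ ⟨ht.1.le, ht.2⟩ ht.1.le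
    simp only at this
    have h1 : j c - c/2 ≤ j t - t/2 := this
    have : 0 < t - c := by linarith [ht.1]
    linarith
  have hjnn : ∀ t ∈ I, 0 ≤ j t := by
    intro t ht
    rcases eq_or_lt_of_le ht.1 with h | h
    · exact h ▸ hjc'
    · exact (hjpos t ⟨h, ht.2⟩).le
  -- j' monotone on I
  have hj'mono : MonotoneOn j' I := by
    apply monotoneOn_of_deriv_nonneg hIconv hj'c.continuousOn
    · intro x hx
      exact (hj'' x).differentiableAt.differentiableWithinAt
    · intro x hx
      rw [(hj'' x).deriv]
      rw [hIint] at hx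
      have hjx : 0 ≤ j x := hjnn x ⟨hx.1.le, hx.2.le⟩
      have hKx := hKneg x
      have := heq x
      nlinarith
  -- I ∩ S = ∅, contradiction with sInf
  obtain ⟨x, hxS, hxlt⟩ := (csInf_lt_iff hbdd hne).mp (show sInf S < c + η by rw [← hcdef]; linarith)
  have hxc : c ≤ x := csInf_le hbdd hxS
  have hxI : x ∈ I := ⟨hxc, hxlt.le⟩
  have h1x : 1 ≤ j' x := le_trans hj'c1 (hj'mono ⟨le_refl c, by linarith⟩ hxI hxc)
  have h0x : 0 ≤ j x := hjnn x hxI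
  rcases hxS.2 with h | h
  · linarith
  · linarith

/-- If `K ≤ 0` is continuous and negative curvature recurs uniformly (on every window of
length `τ` there is a subinterval of length `ε` on which `K ≤ −δ`), then the Jacobi solution
with `j(0) = 0`, `j'(0) = 1` grows at least exponentially: there are `C > 0`, `λ > 1` with
`j(t) ≥ C·λ^t` for all `t ≥ τ`. -/
theorem recurrence_of_negative_curvature_exponential_growth
    (K j j' j'' : ℝ → ℝ) (τ δ ε : ℝ)
    (hK : Continuous K) (hKneg : ∀ t, K t ≤ 0)
    (hτ : 0 < τ) (hδ : 0 < δ) (hε : 0 < ε)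
    (hrec : ∀ t₀ : ℝ, ∃ a : ℝ, t₀ ≤ a ∧ a + ε ≤ t₀ + τ ∧
      ∀ t ∈ Set.Icc a (a + ε), K t ≤ -δ)
    (hj' : ∀ t, HasDerivAt j (j' t) t)
    (hj'' : ∀ t, HasDerivAt j' (j'' t) t)
    (heq : ∀ t, j'' t + K t * j t = 0)
    (h0 : j 0 = 0) (h1 : j' 0 = 1) :
    ∃ C > (0 : ℝ), ∃ l > (1 : ℝ), ∀ t ≥ τ, C * l ^ t ≤ j t := by
  have hjc : Continuous j := continuous_iff_continuousAt.mpr fun t => (hj' t).continuousAt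
  have hj'c : Continuous j' := continuous_iff_continuousAt.mpr fun t => (hj'' t).continuousAt
  have hpos := jacobi_pos_aux K j j' j'' hKneg hj' hj'' heq h0 h1
  -- j is monotone on [0, ∞)
  have hjmono : MonotoneOn j (Ici 0) := by
    apply monotoneOn_of_deriv_nonneg (convex_Ici 0) hjc.continuousOn
    · intro x hx; exact (hj' x).differentiableAt.differentiableWithinAt
    · intro x hx
      rw [interior_Ici] at hx
      rw [(hj' x).deriv]
      linarith [(hpos x (le_of_lt hx)).2]
  -- j t ≥ t for t ≥ 0
  have hjt : ∀ t, 0 ≤ t → t ≤ j t := by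
    have hm : MonotoneOn (fun t => j t - t) (Ici 0) := by
      apply monotoneOn_of_deriv_nonneg (convex_Ici 0) ((hjc.sub continuous_id).continuousOn)
      · intro x hx; exact ((hj' x).sub (hasDerivAt_id x)).differentiableAt.differentiableWithinAt
      · intro x hx
        rw [interior_Ici] at hx
        rw [((hj' x).sub (hasDerivAt_id x)).deriv]
        linarith [(hpos x (le_of_lt hx)).2]
    intro t ht
    have := hm (mem_Ici.mpr le_rfl) (mem_Ici.mpr ht) ht
    simp only [h0] at this
    linarith
  set ρ : ℝ := 1 + δ * ε ^ 2 / 2 with hρdef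
  have hρ1 : 1 < ρ := by
    have : 0 < δ * ε ^ 2 / 2 := by positivity
    rw [hρdef]; linarith
  have hρ0 : 0 < ρ := by linarith
  clear_value ρ
  -- multiplicative step
  have hstep : ∀ t₀, 0 ≤ t₀ → ρ * j t₀ ≤ j (t₀ + τ) := by
    intro t₀ ht₀
    obtain ⟨a, ha1, ha2, ha3⟩ := hrec t₀
    have ha0 : 0 ≤ a := le_trans ht₀ ha1
    have hja : 0 ≤ j a := (hpos a ha0).1
    have hj'a : 1 ≤ j' a := (hpos a ha0).2
    have hjt₀a : j t₀ ≤ j a := hjmono (mem_Ici.mpr ht₀) (mem_Ici.mpr ha0) ha1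
    set I : Set ℝ := Icc a (a + ε) with hIdef
    have hIint : interior I = Ioo a (a + ε) := interior_Icc
    -- h' t := j' t - j' a - δ * j a * (t - a) has nonneg derivative on I
    set g' : ℝ → ℝ := fun t => j' t - j' a - δ * j a * (t - a) with hg'def
    have hg'deriv : ∀ t, HasDerivAt g' (j'' t - δ * j a) t := by
      intro t
      have h2 : HasDerivAt (fun t => δ * j a * (t - a)) (δ * j a) t := by
        simpa using ((hasDerivAt_id t).sub_const a).const_mul (δ * j a)
      rw [hg'def]; exact ((hj'' t).sub_const (j' a)).sub h2
    have hg'mono : MonotoneOn g' I := by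
      apply monotoneOn_of_deriv_nonneg (convex_Icc _ _)
        (continuous_iff_continuousAt.mpr fun t => (hg'deriv t).continuousAt).continuousOn
      · intro x hx; exact (hg'deriv x).differentiableAt.differentiableWithinAt
      · intro x hx
        rw [(hg'deriv x).deriv]
        rw [hIint] at hx
        have hxI : x ∈ I := ⟨hx.1.le, hx.2.le⟩
        have hKx : K x ≤ -δ := ha3 x hxI
        have hjx : j a ≤ j x := hjmono (mem_Ici.mpr ha0) (mem_Ici.mpr (by linarith [hx.1])) hx.1.le
        have hjx0 : 0 ≤ j x := le_trans hja hjx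
        have := heq x
        nlinarith
    have hg'nonneg : ∀ t ∈ I, 0 ≤ g' t := by
      intro t ht
      have := hg'mono (left_mem_Icc.mpr (by linarith)) ht ht.1
      simp only [hg'def] at this ⊢
      have ha' : j' a - j' a - δ * j a * (a - a) = 0 := by ring
      linarith [ha' ▸ this]
    -- g t := j t - j' a * (t-a) - (δ * j a / 2) * (t-a)^2 is monotone on I
    set g : ℝ → ℝ := fun t => j t - j' a * (t - a) - δ * j a / 2 * (t - a) ^ 2 with hgdef
    have hgderiv : ∀ t, HasDerivAt g (g' t) t := by
      intro t
      have h2 : HasDerivAt (fun t => j' a * (t - a)) (j' a) t := by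
        simpa using ((hasDerivAt_id t).sub_const a).const_mul (j' a)
      have hbase : HasDerivAt (fun s => (s - a) ^ 2) (2 * (t - a)) t := by
        simpa using ((hasDerivAt_id' t).sub_const a).fun_pow 2
      have h3 : HasDerivAt (fun s => δ * j a / 2 * (s - a) ^ 2) (δ * j a * (t - a)) t := by
        have := hbase.const_mul (δ * j a / 2)
        exact this.congr_deriv (by ring)
      have := ((hj' t).sub h2).sub h3
      rw [hgdef]; exact this
    have hgmono : MonotoneOn g I := by
      apply monotoneOn_of_deriv_nonneg (convex_Icc _ _)
        (continuous_iff_continuousAt.mpr fun t => (hgderiv t).continuousAt).continuousOn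
      · intro x hx; exact (hgderiv x).differentiableAt.differentiableWithinAt
      · intro x hx
        rw [(hgderiv x).deriv]
        rw [hIint] at hx
        exact hg'nonneg x ⟨hx.1.le, hx.2.le⟩
    have hkey : g a ≤ g (a + ε) :=
      hgmono (left_mem_Icc.mpr (by linarith)) (right_mem_Icc.mpr (by linarith)) (by linarith)
    have hga : g a = j a := by simp [hgdef]
    have hgae : g (a + ε) = j (a + ε) - j' a * ε - δ * j a / 2 * ε ^ 2 := by
      simp [hgdef]
    have hjae : j a + j' a * ε + δ * j a / 2 * ε ^ 2 ≤ j (a + ε) := by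
      rw [hga, hgae] at hkey; linarith
    have hfinal : j (a + ε) ≤ j (t₀ + τ) :=
      hjmono (mem_Ici.mpr (by linarith)) (mem_Ici.mpr (by linarith)) ha2
    have : ρ * j t₀ ≤ ρ * j a := by
      apply mul_le_mul_of_nonneg_left hjt₀a hρ0.le
    have hρja : ρ * j a = j a + δ * j a / 2 * ε ^ 2 := by rw [hρdef]; ring
    have hje : 0 ≤ j' a * ε := mul_nonneg (by linarith) hε.le
    linarith
  -- iterate the step
  have hiter : ∀ n : ℕ, ∀ t, 0 ≤ t → ρ ^ n * j t ≤ j (t + n * τ) := by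
    intro n
    induction n with
    | zero => intro t ht; simp
    | succ n ih =>
      intro t ht
      have h1 : ρ ^ n * j (t + τ) ≤ j ((t + τ) + n * τ) := ih (t + τ) (by linarith)
      have h2 : ρ * j t ≤ j (t + τ) := hstep t ht
      have h3 : ρ ^ n * (ρ * j t) ≤ ρ ^ n * j (t + τ) :=
        mul_le_mul_of_nonneg_left h2 (pow_nonneg hρ0.le n)
      have heqt : (t + τ) + n * τ = t + (n + 1 : ℕ) * τ := by push_cast; ring
      calc ρ ^ (n + 1) * j t = ρ ^ n * (ρ * j t) := by ring
        _ ≤ ρ ^ n * j (t + τ) := h3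
        _ ≤ j ((t + τ) + n * τ) := h1
        _ = j (t + (n + 1 : ℕ) * τ) := by rw [heqt]
  -- conclude
  refine ⟨τ / ρ ^ 2, by positivity, ρ ^ (1/τ), ?_, ?_⟩
  · exact (Real.one_lt_rpow_iff_of_pos hρ0).mpr (Or.inl ⟨hρ1, by positivity⟩)
  · intro t ht
    set n : ℕ := ⌊(t - τ) / τ⌋₊ with hndef
    have htτ : 0 ≤ (t - τ) / τ := div_nonneg (by linarith) hτ.le
    have hn1 : (n : ℝ) ≤ (t - τ) / τ := Nat.floor_le htτ
    have hn2 : (t - τ) / τ < n + 1 := Nat.lt_floor_add_one _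
    have hnτ : (n : ℝ) * τ ≤ t - τ := by
      rw [← le_div_iff₀ hτ]; exact hn1
    have hs : τ ≤ t - n * τ := by linarith
    have h1 : ρ ^ n * j (t - n * τ) ≤ j ((t - n * τ) + n * τ) :=
      hiter n (t - n * τ) (by linarith)
    have h2 : (t - n * τ) + n * τ = t := by ring
    rw [h2] at h1
    have h3 : τ ≤ j (t - n * τ) := le_trans hs (hjt _ (by linarith))
    have h4 : ρ ^ n * τ ≤ ρ ^ n * j (t - n * τ) :=
      mul_le_mul_of_nonneg_left h3 (pow_nonneg hρ0.le n)
    -- now show C * l^t ≤ τ * ρ^n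
    have hexp : t / τ - 2 ≤ (n : ℝ) := by
      have h5 : (t - τ) / τ = t / τ - 1 := by field_simp
      rw [h5] at hn2; linarith
    have hrw : (ρ ^ (1/τ) : ℝ) ^ t = ρ ^ (t / τ) := by
      rw [← Real.rpow_mul hρ0.le, one_div, inv_mul_eq_div]
    have e2 : ρ ^ (t/τ - 2) ≤ (ρ : ℝ) ^ ((n : ℕ) : ℝ) :=
      (Real.rpow_le_rpow_left_iff hρ1).mpr hexp
    rw [Real.rpow_natCast] at e2
    have e1 : τ / ρ ^ 2 * ρ ^ (t/τ) = τ * ρ ^ (t/τ - 2) := by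
      rw [Real.rpow_sub hρ0, show ((2:ℝ)) = ((2:ℕ):ℝ) by norm_num, Real.rpow_natCast]
      ring
    have hlt : τ / ρ ^ 2 * (ρ ^ (1/τ)) ^ t ≤ ρ ^ n * τ := by
      rw [hrw, e1]
      calc τ * ρ ^ (t/τ - 2) ≤ τ * ρ ^ n := mul_le_mul_of_nonneg_left e2 hτ.le
        _ = ρ ^ n * τ := by ring
    linarith
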